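/- Suppose X is invertible, every λ ∈ ℂ with D¹_N(λ) = 0 satisfies Re λ > 0, and for every eigenvalue λ of W = X⁻¹Y one has n_j − λ r_j ≠ 0 for all j = 1,…,N−1. Then I + W is invertible and every eigenvalue μ of (I + W)⁻¹ satisfies |μ| < 1; that is, the amplification matrix of the backward Euler compact scheme has spectral radius less than 1, so the scheme is stable. -/

import Mathlib

/-- Labels `a`, `b`, `c` for the sequences in the collection `𝒜_N`. -/
inductive Label where
  | a : Label
  | b : Label
  | c : Label
deriving DecidableEq

instance : Fintype Label :=
  ⟨{Label.a, Label.b, Label.c}, fun x => by cases x <;> simp⟩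

/-- Admissibility of a label sequence (with `n = N - 1` labels, index `i` standing
for `j = i + 1`): the last label is not `a` and, for `2 ≤ j ≤ N-1`, `t_j = c` implies
`t_{j-1} = a` while `t_j ∈ {a,b}` implies `t_{j-1} ∈ {b,c}`. -/
def Admissible {n : ℕ} (t : Fin n → Label) : Prop :=
  (∀ h : 0 < n, t ⟨n - 1, by omega⟩ ≠ Label.a) ∧
  ∀ j : ℕ, ∀ h : j + 1 < n,
    (t ⟨j + 1, h⟩ = Label.c → t ⟨j, by omega⟩ = Label.a) ∧
    (t ⟨j + 1, h⟩ ≠ Label.c → t ⟨j, by omega⟩ ≠ Label.a)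

/-- The collection `𝒜_N` (with `n = N - 1` labels per sequence). -/
noncomputable def AdmSet (n : ℕ) : Finset (Fin n → Label) :=
  haveI := Classical.decPred (Admissible (n := n))
  Finset.univ.filter Admissible

/-- The value `v_j(t)`: `A_j` if `t_j = a`, `-B_j` if `t_j = b`, `-C_j` if `t_j = c`. -/
def labelVal {n : ℕ} (A B C : ℕ → ℂ) (t : Fin n → Label) (j : Fin n) : ℂ :=
  match t j with
  | Label.a => A (j.val + 1)
  | Label.b => -B (j.val + 1)
  | Label.c => -C (j.val + 1)

/-- `D¹_N = Σ_{t ∈ 𝒜_N, t_1 ≠ c} ∏_{j=1}^{N-1} v_j(t)`, with `n = N - 1`. -/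
noncomputable def D1 (n : ℕ) (A B C : ℕ → ℂ) : ℂ :=
  haveI : DecidablePred fun t : Fin n → Label => ∀ h : 0 < n, t ⟨0, h⟩ ≠ Label.c :=
    Classical.decPred _
  ∑ t ∈ (AdmSet n).filter (fun t => ∀ h : 0 < n, t ⟨0, h⟩ ≠ Label.c),
    ∏ j, labelVal A B C t j

attribute [local instance 0] Classical.propDecidable

open Finset in
/-- sum over admissible sequences with a condition on the first label -/
noncomputable def Saux (n : ℕ) (Q : Label → Prop) (A B C : ℕ → ℂ) : ℂ :=
  haveI := Classical.decPred (fun t : Fin (n+1) → Label => Admissible t ∧ Q (t 0))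
  ∑ t ∈ Finset.univ.filter (fun t : Fin (n+1) → Label => Admissible t ∧ Q (t 0)),
    ∏ j, labelVal A B C t j

def sh (f : ℕ → ℂ) : ℕ → ℂ := fun k => f (k + 1)

lemma Saux_eq_total (n : ℕ) (Q : Label → Prop) (A B C : ℕ → ℂ) :
    Saux n Q A B C = ∑ t : Fin (n+1) → Label,
      if Admissible t ∧ Q (t 0) then ∏ j, labelVal A B C t j else 0 := by
  classical
  unfold Saux
  rw [Finset.sum_filter]
  apply Finset.sum_congr rfl
  intro t _
  congr

lemma sum_label (g : Label → ℂ) : ∑ x : Label, g x = g .a + g .b + g .c := by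
  rw [show (Finset.univ : Finset Label) = ({Label.a, Label.b, Label.c} : Finset Label) from rfl]
  rw [Finset.sum_insert (by decide), Finset.sum_insert (by decide), Finset.sum_singleton]
  ring

lemma D1_eq_Saux (n : ℕ) (A B C : ℕ → ℂ) :
    D1 (n+1) A B C = Saux n (· ≠ Label.c) A B C := by
  classical
  unfold D1 Saux AdmSet
  rw [Finset.filter_filter]
  apply Finset.sum_congr ?_ (fun _ _ => rfl)
  ext t
  simp only [Finset.mem_filter, Finset.mem_univ, true_and]
  constructor
  · rintro ⟨h1, h2⟩; exact ⟨h1, h2 (Nat.succ_pos n)⟩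
  · rintro ⟨h1, h2⟩; exact ⟨h1, fun _ => h2⟩

lemma cons_mk_succ {n : ℕ} (x : Label) (s : Fin (n+1) → Label) (k : ℕ) (h : k + 1 < n + 2) :
    Fin.cons (α := fun _ => Label) x s ⟨k + 1, h⟩ = s ⟨k, by omega⟩ := rfl

lemma adm_cons {n : ℕ} (x : Label) (s : Fin (n+1) → Label) :
    Admissible (Fin.cons x s) ↔
      Admissible s ∧ (s 0 = Label.c → x = Label.a) ∧ (s 0 ≠ Label.c → x ≠ Label.a) := by
  constructor
  · rintro ⟨h1, h2⟩
    refine ⟨⟨?_, ?_⟩, ?_, ?_⟩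
    · intro hp
      exact h1 (by omega)
    · intro j hj
      exact h2 (j + 1) (by omega)
    · exact (h2 0 (by omega)).1
    · exact (h2 0 (by omega)).2
  · rintro ⟨⟨h1, h2⟩, h3, h4⟩
    constructor
    · intro hp
      exact h1 (by omega)
    · intro j hj
      match j with
      | 0 => exact ⟨h3, h4⟩
      | k + 1 => exact h2 k (by omega)

lemma prod_cons {n : ℕ} (A B C : ℕ → ℂ) (x : Label) (s : Fin (n+1) → Label) :
    ∏ j : Fin (n+2), labelVal A B C (Fin.cons x s) j =
      (match x with
        | Label.a => A 1
        | Label.b => -B 1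
        | Label.c => -C 1) *
      ∏ j : Fin (n+1), labelVal (sh A) (sh B) (sh C) s j := by
  rw [Fin.prod_univ_succ]
  have h1 : labelVal A B C (Fin.cons x s) 0 =
      (match x with
        | Label.a => A 1
        | Label.b => -B 1
        | Label.c => -C 1) := by
    cases x <;> rfl
  have h2 : ∀ j : Fin (n+1), labelVal A B C (Fin.cons x s) j.succ =
      labelVal (sh A) (sh B) (sh C) s j := by
    intro j
    cases hsj : s j <;> simp [labelVal, hsj, Fin.cons_succ, sh, Fin.val_succ]
  rw [h1]
  exact congrArg _ (Finset.prod_congr rfl (fun j _ => h2 j))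

lemma adm_one (x : Label) : Admissible (fun _ : Fin 1 => x) ↔ x ≠ Label.a := by
  constructor
  · rintro ⟨h1, _⟩; exact h1 (by omega)
  · intro hx; exact ⟨fun _ => hx, fun j h => absurd h (by omega)⟩

lemma Saux_zero (Q : Label → Prop) (A B C : ℕ → ℂ) :
    Saux 0 Q A B C = (if Q Label.b then -B 1 else 0) + (if Q Label.c then -C 1 else 0) := by
  classical
  haveI : Unique (Fin (0+1)) := inferInstanceAs (Unique (Fin 1))
  unfold Saux
  rw [Finset.sum_filter]
  refine Eq.trans (Fintype.sum_equiv (Equiv.funUnique (Fin (0+1)) Label) _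
    (fun x => if x ≠ Label.a ∧ Q x then
      (match x with
        | Label.a => A 1
        | Label.b => -B 1
        | Label.c => -C 1) else 0) ?_) ?_
  · intro t
    have ht : t = fun _ : Fin (0+1) => t 0 := funext fun i => by rw [Subsingleton.elim i 0]
    have hadm : Admissible t ↔ t 0 ≠ Label.a := by
      constructor
      · intro h; rw [ht] at h; exact (adm_one (t 0)).1 h
      · intro h; rw [ht]; exact (adm_one (t 0)).2 h
    have hprod : ∏ j : Fin (0+1), labelVal A B C t j = (match t 0 with
        | Label.a => A 1
        | Label.b => -B 1
        | Label.c => -C 1) := by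
      rw [Fin.prod_univ_one]
      cases h : t 0 <;> simp [labelVal, h]
    have hd : t default = t 0 := congrArg t (Subsingleton.elim _ _)
    rw [hprod]
    have he : (Equiv.funUnique (Fin (0+1)) Label) t = t 0 := congrArg t (Subsingleton.elim _ _)
    simp only [hadm, he]
  · rw [sum_label]
    by_cases hb : Q Label.b <;> by_cases hc : Q Label.c <;>
      simp [hb, hc]

lemma adm_cons_a {n : ℕ} (s : Fin (n+1) → Label) :
    Admissible (Fin.cons Label.a s) ↔ (Admissible s ∧ s 0 = Label.c) := by
  rw [adm_cons]
  constructor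
  · rintro ⟨h1, h2, h3⟩
    refine ⟨h1, ?_⟩
    by_contra hc
    exact h3 hc rfl
  · rintro ⟨h1, h2⟩
    exact ⟨h1, fun _ => rfl, fun hc => absurd h2 hc⟩

lemma adm_cons_b {n : ℕ} (s : Fin (n+1) → Label) :
    Admissible (Fin.cons Label.b s) ↔ (Admissible s ∧ s 0 ≠ Label.c) := by
  rw [adm_cons]
  constructor
  · rintro ⟨h1, h2, h3⟩
    refine ⟨h1, fun hc => ?_⟩
    exact absurd (h2 hc) (by decide)
  · rintro ⟨h1, h2⟩
    exact ⟨h1, fun hc => absurd hc h2, fun _ h => absurd h (by decide)⟩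

lemma adm_cons_c {n : ℕ} (s : Fin (n+1) → Label) :
    Admissible (Fin.cons Label.c s) ↔ (Admissible s ∧ s 0 ≠ Label.c) := by
  rw [adm_cons]
  constructor
  · rintro ⟨h1, h2, h3⟩
    refine ⟨h1, fun hc => ?_⟩
    exact absurd (h2 hc) (by decide)
  · rintro ⟨h1, h2⟩
    exact ⟨h1, fun hc => absurd hc h2, fun _ h => absurd h (by decide)⟩

lemma sum_cons_a (n : ℕ) (A B C : ℕ → ℂ) :
    (∑ s : Fin (n+1) → Label, if Admissible (Fin.cons Label.a s) then
      ∏ j : Fin (n+2), labelVal A B C (Fin.cons Label.a s) j else 0)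
    = A 1 * Saux n (· = Label.c) (sh A) (sh B) (sh C) := by
  classical
  unfold Saux
  rw [Finset.sum_filter, Finset.mul_sum]
  apply Finset.sum_congr rfl
  intro s _
  rw [prod_cons]
  simp only [adm_cons_a, mul_ite, mul_zero]

lemma sum_cons_b (n : ℕ) (A B C : ℕ → ℂ) :
    (∑ s : Fin (n+1) → Label, if Admissible (Fin.cons Label.b s) then
      ∏ j : Fin (n+2), labelVal A B C (Fin.cons Label.b s) j else 0)
    = -B 1 * Saux n (· ≠ Label.c) (sh A) (sh B) (sh C) := by
  classical
  unfold Saux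
  rw [Finset.sum_filter, Finset.mul_sum]
  apply Finset.sum_congr rfl
  intro s _
  rw [prod_cons]
  simp only [adm_cons_b, mul_ite, mul_zero]

lemma sum_cons_c (n : ℕ) (A B C : ℕ → ℂ) :
    (∑ s : Fin (n+1) → Label, if Admissible (Fin.cons Label.c s) then
      ∏ j : Fin (n+2), labelVal A B C (Fin.cons Label.c s) j else 0)
    = -C 1 * Saux n (· ≠ Label.c) (sh A) (sh B) (sh C) := by
  classical
  unfold Saux
  rw [Finset.sum_filter, Finset.mul_sum]
  apply Finset.sum_congr rfl
  intro s _
  rw [prod_cons]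
  simp only [adm_cons_c, mul_ite, mul_zero]

lemma Saux_succ (n : ℕ) (Q : Label → Prop) (A B C : ℕ → ℂ) :
    Saux (n+1) Q A B C =
      (if Q Label.a then A 1 * Saux n (· = Label.c) (sh A) (sh B) (sh C) else 0) +
      (if Q Label.b then -B 1 * Saux n (· ≠ Label.c) (sh A) (sh B) (sh C) else 0) +
      (if Q Label.c then -C 1 * Saux n (· ≠ Label.c) (sh A) (sh B) (sh C) else 0) := by
  classical
  rw [Saux_eq_total]
  refine Eq.trans (Eq.symm (Equiv.sum_comp (Fin.consEquiv (fun _ : Fin (n+2) => Label))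
    (fun t => if Admissible t ∧ Q (t 0) then ∏ j, labelVal A B C t j else 0))) ?_
  rw [Fintype.sum_prod_type]
  rw [sum_label (fun x => ∑ s : Fin (n+1) → Label,
    if Admissible ((Fin.consEquiv (fun _ : Fin (n+2) => Label)) (x, s)) ∧ Q
        (((Fin.consEquiv (fun _ : Fin (n+2) => Label)) (x, s)) 0) then
      ∏ j, labelVal A B C ((Fin.consEquiv (fun _ : Fin (n+2) => Label)) (x, s)) j else 0)]
  have hc0 : ∀ (x : Label) (s : Fin (n+1) → Label),
      ((Fin.consEquiv (fun _ : Fin (n+2) => Label)) (x, s)) = Fin.cons x s := fun _ _ => rfl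
  have key : ∀ x : Label,
      (∑ s : Fin (n+1) → Label,
        if Admissible ((Fin.consEquiv (fun _ : Fin (n+2) => Label)) (x, s)) ∧ Q
            (((Fin.consEquiv (fun _ : Fin (n+2) => Label)) (x, s)) 0) then
          ∏ j, labelVal A B C ((Fin.consEquiv (fun _ : Fin (n+2) => Label)) (x, s)) j else 0)
      = if Q x then
          (∑ s : Fin (n+1) → Label, if Admissible (Fin.cons x s) then
            ∏ j : Fin (n+2), labelVal A B C (Fin.cons x s) j else 0) else 0 := by
    intro x
    simp only [hc0, Fin.cons_zero]
    by_cases hQ : Q x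
    · simp only [hQ, and_true, if_true]
    · simp [hQ]
  rw [key Label.a, key Label.b, key Label.c, sum_cons_a, sum_cons_b, sum_cons_c]

lemma D1_zero (A B C : ℕ → ℂ) : D1 0 A B C = 1 := by
  classical
  unfold D1 AdmSet
  rw [Finset.filter_filter]
  have : Finset.filter
      (fun t : Fin 0 → Label => Admissible t ∧ ∀ h : 0 < 0, t ⟨0, h⟩ ≠ Label.c)
      Finset.univ = Finset.univ := by
    apply Finset.filter_true_of_mem
    intro t _
    exact ⟨⟨fun h => absurd h (by omega), fun j h => absurd h (by omega)⟩,
      fun h => absurd h (by omega)⟩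
  rw [this]
  rw [Finset.sum_congr rfl (fun t _ => Finset.prod_of_isEmpty _)]
  simp [Finset.card_univ]

lemma D1_one (A B C : ℕ → ℂ) : D1 1 A B C = -B 1 := by
  rw [show (1:ℕ) = 0 + 1 from rfl, D1_eq_Saux, Saux_zero]
  simp

lemma Saux_c (n : ℕ) (A B C : ℕ → ℂ) :
    Saux n (· = Label.c) A B C = -C 1 * D1 n (sh A) (sh B) (sh C) := by
  cases n with
  | zero => rw [Saux_zero, D1_zero]; simp
  | succ m =>
    rw [Saux_succ, D1_eq_Saux]
    simp

lemma D1_succ_succ (n : ℕ) (A B C : ℕ → ℂ) :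
    D1 (n+2) A B C = -B 1 * D1 (n+1) (sh A) (sh B) (sh C) +
      A 1 * (-C 2) * D1 n (sh (sh A)) (sh (sh B)) (sh (sh C)) := by
  rw [show n + 2 = (n + 1) + 1 from rfl, D1_eq_Saux, Saux_succ, Saux_c, D1_eq_Saux]
  have : sh C 1 = C 2 := rfl
  simp [this]
  ring

def triC (n : ℕ) (sub dia sup : ℕ → ℂ) : Matrix (Fin n) (Fin n) ℂ :=
  Matrix.of fun i j =>
    if i.val = j.val then dia (i.val + 1)
    else if i.val + 1 = j.val then sup (i.val + 1)
    else if j.val + 1 = i.val then sub (i.val + 1)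
    else 0

lemma triC_sub_succ (n : ℕ) (f g h : ℕ → ℂ) :
    (triC (n+1) f g h).submatrix Fin.succ Fin.succ = triC n (sh f) (sh g) (sh h) := by
  ext i j
  simp only [Matrix.submatrix_apply, triC, Matrix.of_apply, Fin.val_succ, sh]
  split_ifs <;> first | rfl | omega

lemma triC_det_zero (f g h : ℕ → ℂ) : (triC 0 f g h).det = 1 :=
  Matrix.det_isEmpty

lemma triC_det_one (f g h : ℕ → ℂ) : (triC 1 f g h).det = g 1 := by
  rw [Matrix.det_fin_one]
  rfl

lemma triC_det_rec (n : ℕ) (f g h : ℕ → ℂ) :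
    (triC (n+2) f g h).det = g 1 * (triC (n+1) (sh f) (sh g) (sh h)).det
      - f 2 * (h 1 * (triC n (sh (sh f)) (sh (sh g)) (sh (sh h))).det) := by
  rw [Matrix.det_succ_column_zero]
  rw [Fin.sum_univ_succ, Fin.sum_univ_succ]
  have hz : ∀ i : Fin n, ((-1:ℂ) ^ ((i.succ.succ : Fin (n+2)) : ℕ) *
      triC (n+2) f g h i.succ.succ 0 *
      ((triC (n+2) f g h).submatrix i.succ.succ.succAbove Fin.succ).det) = 0 := by
    intro i
    have : triC (n+2) f g h i.succ.succ 0 = 0 := by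
      simp only [triC, Matrix.of_apply, Fin.val_succ, Fin.val_zero]
      split_ifs <;> first | rfl | omega | exact absurd ‹False› (by simp)
    rw [this]
    ring
  rw [Finset.sum_congr rfl (fun i _ => hz i), Finset.sum_const_zero, add_zero]
  -- first term
  have e00 : triC (n+2) f g h 0 0 = g 1 := rfl
  have e10 : triC (n+2) f g h (Fin.succ 0) 0 = f 2 := by
    simp only [triC, Matrix.of_apply, Fin.val_succ, Fin.val_zero]
    norm_num
  have hsub0 : (triC (n+2) f g h).submatrix (0 : Fin (n+2)).succAbove Fin.succ =
      triC (n+1) (sh f) (sh g) (sh h) := by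
    rw [Fin.succAbove_zero, triC_sub_succ]
  set M1 := (triC (n+2) f g h).submatrix ((0:Fin (n+1)).succ).succAbove Fin.succ with hM1def
  have hM1 : M1.det = h 1 * (triC n (sh (sh f)) (sh (sh g)) (sh (sh h))).det := by
    rw [Matrix.det_succ_row_zero, Fin.sum_univ_succ]
    have hz2 : ∀ j : Fin n, ((-1:ℂ)^(((j.succ : Fin (n+1))):ℕ) * M1 0 j.succ *
        (M1.submatrix Fin.succ j.succ.succAbove).det) = 0 := by
      intro j
      have he : M1 0 j.succ = 0 := by
        simp only [hM1def, Matrix.submatrix_apply, Fin.succ_succAbove_zero, triC,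
          Matrix.of_apply, Fin.val_succ, Fin.val_zero]
        split_ifs <;> first | rfl | omega | exact absurd ‹False› (by simp)
      rw [he]
      ring
    rw [Finset.sum_congr rfl (fun j _ => hz2 j), Finset.sum_const_zero, add_zero]
    have he2 : M1 0 0 = h 1 := by
      simp only [hM1def, Matrix.submatrix_apply, Fin.succ_succAbove_zero, triC,
        Matrix.of_apply, Fin.val_succ, Fin.val_zero]
      norm_num
    have hsub2 : M1.submatrix Fin.succ (0 : Fin (n+1)).succAbove =
        triC n (sh (sh f)) (sh (sh g)) (sh (sh h)) := by
      rw [Fin.succAbove_zero]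
      ext i j
      simp only [hM1def, Matrix.submatrix_apply, Fin.succ_succAbove_succ, Fin.zero_succAbove, triC,
        Matrix.of_apply, Fin.val_succ, sh]
      split_ifs <;> first | rfl | omega | exact absurd ‹False› (by simp)
    rw [he2, hsub2]
    simp
  rw [hsub0, hM1, e00, e10]
  have hval1 : ((Fin.succ (0 : Fin (n+1))) : ℕ) = 1 := rfl
  rw [hval1, Fin.val_zero]
  ring

lemma det_eq_D1 : ∀ (n : ℕ) (f g h : ℕ → ℂ),
    (triC n f g h).det =
      D1 n (fun j => -h j) (fun j => -g j) (fun j => -f j) := by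
  intro n
  induction n using Nat.strong_induction_on with
  | _ n ih =>
    match n with
    | 0 =>
      intro f g h
      rw [triC_det_zero, D1_zero]
    | 1 =>
      intro f g h
      rw [triC_det_one, D1_one]
      ring_nf
    | (k+2) =>
      intro f g h
      rw [triC_det_rec, ih (k+1) (by omega), ih k (by omega), D1_succ_succ]
      have e1 : sh (fun j => -h j) = fun j => -(sh h) j := rfl
      have e2 : sh (fun j => -g j) = fun j => -(sh g) j := rfl
      have e3 : sh (fun j => -f j) = fun j => -(sh f) j := rfl
      have e4 : sh (fun j => -(sh h) j) = fun j => -(sh (sh h)) j := rfl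
      have e5 : sh (fun j => -(sh g) j) = fun j => -(sh (sh g)) j := rfl
      have e6 : sh (fun j => -(sh f) j) = fun j => -(sh (sh f)) j := rfl
      rw [e1, e2, e3, e4, e5, e6]
      ring_nf

/-- The `(N-1)×(N-1)` tridiagonal complex matrix with 1-indexed subdiagonal entries
`sub_{i+1}` (at position `(i+1, i)`), diagonal entries `dia_i` and superdiagonal
entries `sup_i` (at position `(i, i+1)`), built from real data. -/
def triMatC (n : ℕ) (sub dia sup : ℕ → ℝ) : Matrix (Fin n) (Fin n) ℂ :=
  Matrix.of fun i j =>
    if i.val = j.val then (dia (i.val + 1) : ℂ)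
    else if i.val + 1 = j.val then (sup (i.val + 1) : ℂ)
    else if j.val + 1 = i.val then (sub (i.val + 1) : ℂ)
    else 0

/-- `μ` is an eigenvalue of the square complex matrix `M` if `M v = μ v` for some
nonzero vector `v`. -/
def IsEig {n : ℕ} (M : Matrix (Fin n) (Fin n) ℂ) (μ : ℂ) : Prop :=
  ∃ v : Fin n → ℂ, v ≠ 0 ∧ M.mulVec v = μ • v

/-- If `X` is invertible, every root of `D¹_N` has positive real part, and
`n_j - λ r_j ≠ 0` for every eigenvalue `λ` of `W = X⁻¹ Y` and every `j`, then
`I + W` is invertible and every eigenvalue `μ` of `(I + W)⁻¹` satisfies `|μ| < 1`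
(the backward Euler compact scheme is stable). -/
theorem stmt3 (N : ℕ) (hN : 2 ≤ N) (p q r l m n : ℕ → ℝ)
    (hX : IsUnit (triMatC (N - 1) p q r).det)
    (hroot : ∀ lam : ℂ,
      D1 (N - 1) (fun j => (n j : ℂ) - lam * (r j : ℂ))
        (fun j => (m j : ℂ) - lam * (q j : ℂ))
        (fun j => (l j : ℂ) - lam * (p j : ℂ)) = 0 → 0 < lam.re)
    (hA : ∀ lam : ℂ,
      IsEig ((triMatC (N - 1) p q r)⁻¹ * triMatC (N - 1) l m n) lam →
      ∀ j, 1 ≤ j → j ≤ N - 1 → (n j : ℂ) - lam * (r j : ℂ) ≠ 0) :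
    IsUnit (1 + (triMatC (N - 1) p q r)⁻¹ * triMatC (N - 1) l m n).det ∧
    ∀ μ : ℂ,
      IsEig (1 + (triMatC (N - 1) p q r)⁻¹ * triMatC (N - 1) l m n)⁻¹ μ →
      ‖μ‖ < 1 := by
  set X := triMatC (N - 1) p q r with hXdef
  set Y := triMatC (N - 1) l m n with hYdef
  set W := X⁻¹ * Y with hWdef
  -- every eigenvalue of W has positive real part
  have hW : ∀ lam : ℂ, IsEig W lam → 0 < lam.re := by
    rintro lam ⟨v, hv, hWv⟩
    have hXW : X * W = Y := by
      rw [hWdef, ← Matrix.mul_assoc, Matrix.mul_nonsing_inv X hX, Matrix.one_mul]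
    have h0 : (lam • X - Y).mulVec v = 0 := by
      rw [Matrix.sub_mulVec, Matrix.smul_mulVec, ← hXW, ← Matrix.mulVec_mulVec,
        hWv, Matrix.mulVec_smul, sub_self]
    have hdet : (lam • X - Y).det = 0 := by
      rw [← Matrix.exists_mulVec_eq_zero_iff]
      exact ⟨v, hv, h0⟩
    have hmat : lam • X - Y = triC (N - 1) (fun k => lam * p k - l k)
        (fun k => lam * q k - m k) (fun k => lam * r k - n k) := by
      ext i j
      simp only [hXdef, hYdef, Matrix.sub_apply, Matrix.smul_apply, triMatC, triC,
        Matrix.of_apply, smul_eq_mul]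
      split_ifs <;> ring
    rw [hmat, det_eq_D1] at hdet
    apply hroot lam
    have ea : (fun j => (n j : ℂ) - lam * (r j : ℂ)) =
        (fun j => -(fun k => lam * (r k : ℂ) - (n k : ℂ)) j) := by funext j; ring
    have eb : (fun j => (m j : ℂ) - lam * (q j : ℂ)) =
        (fun j => -(fun k => lam * (q k : ℂ) - (m k : ℂ)) j) := by funext j; ring
    have ec : (fun j => (l j : ℂ) - lam * (p j : ℂ)) =
        (fun j => -(fun k => lam * (p k : ℂ) - (l k : ℂ)) j) := by funext j; ring
    rw [ea, eb, ec]
    exact hdet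
  -- invertibility of 1 + W
  have hunit : IsUnit (1 + W).det := by
    rw [isUnit_iff_ne_zero]
    intro hdet0
    obtain ⟨v, hv, hv0⟩ := (Matrix.exists_mulVec_eq_zero_iff).2 hdet0
    have : W.mulVec v = (-1 : ℂ) • v := by
      have := hv0
      rw [Matrix.add_mulVec, Matrix.one_mulVec] at this
      have h' : W.mulVec v = -v := by linear_combination (norm := module) this
      rw [h']
      module
    exact absurd (hW (-1) ⟨v, hv, this⟩) (by norm_num)
  refine ⟨hunit, ?_⟩
  rintro μ ⟨v, hv, hMv⟩
  have hinv : (1 + W) * (1 + W)⁻¹ = 1 := Matrix.mul_nonsing_inv _ hunit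
  have hv' : v = μ • (1 + W).mulVec v := by
    have h1 : (1 + W).mulVec ((1 + W)⁻¹.mulVec v) = v := by
      rw [Matrix.mulVec_mulVec, hinv, Matrix.one_mulVec]
    rw [hMv, Matrix.mulVec_smul] at h1
    exact h1.symm
  have hμ : μ ≠ 0 := by
    intro h0
    rw [h0, zero_smul] at hv'
    exact hv hv'
  have hWv : W.mulVec v = (μ⁻¹ - 1) • v := by
    have h2 : (1 + W).mulVec v = μ⁻¹ • v := by
      conv_rhs => rw [hv']
      rw [smul_smul, inv_mul_cancel₀ hμ, one_smul]
    rw [Matrix.add_mulVec, Matrix.one_mulVec] at h2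
    rw [sub_smul, one_smul, ← h2]
    module
  have hre := hW (μ⁻¹ - 1) ⟨v, hv, hWv⟩
  have habs : 1 < ‖μ⁻¹‖ := by
    calc 1 < (μ⁻¹).re := by
            have : (μ⁻¹ - 1).re = (μ⁻¹).re - 1 := by simp
            rw [this] at hre
            linarith
      _ ≤ ‖μ⁻¹‖ := Complex.re_le_norm _
  rw [norm_inv] at habs
  have := one_lt_inv_iff₀.1 habs
  exact this.2
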